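/- For u ∈ U let z = (L¹)^{−1}L^{qcf}u. Then z'_ℓ = σ(u')_ℓ − σ̄(u') + φ''_{2F}(α̃_{−K}(u') h_{−K,ℓ} − α̃_K(u') h_{K,ℓ}), where σ(u')_ℓ = φ''_F u'_ℓ + φ''_{2F}(u'_{ℓ−1} + 2u'_ℓ + u'_{ℓ+1}) for ℓ ∈ A' = {−K+1,…,K} and σ(u')_ℓ = (φ''_F + 4φ''_{2F})u'_ℓ for ℓ ∈ C' = {−N+1,…,N}∖A'; σ̄(u') = (ε/2)φ''_{2F}(u'_{K+1} − u'_K − u'_{−K+1} + u'_{−K}); α̃_{−K}(u') = u'_{−K+1} − 2u'_{−K} + u'_{−K−1}; α̃_K(u') = u'_{K+2} − 2u'_{K+1} + u'_K; and h_{±K} is as defined previously. -/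

import Mathlib

private lemma tele_sum (v : ℤ → ℝ) (a b : ℤ) (h : a ≤ b) :
    ∑ ℓ ∈ Finset.Icc (a + 1) b, (v ℓ - v (ℓ - 1)) = v b - v a := by
  refine Int.le_induction (motive := fun b _ =>
    ∑ ℓ ∈ Finset.Icc (a + 1) b, (v ℓ - v (ℓ - 1)) = v b - v a) ?_ ?_ b h
  · show _ = _
    rw [show Finset.Icc (a + 1) a = ∅ from Finset.Icc_eq_empty (by omega)]; simp
  · intro b hb ih
    show _ = _
    have e : Finset.Icc (a + 1) (b + 1) = insert (b + 1) (Finset.Icc (a + 1) b) := by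
      ext x; simp only [Finset.mem_Icc, Finset.mem_insert]; omega
    rw [e, Finset.sum_insert (by simp only [Finset.mem_Icc]; omega), ih]
    ring_nf

private lemma const_of_step (D : ℤ → ℝ) (a b : ℤ)
    (h : ∀ ℓ, a ≤ ℓ → ℓ + 1 ≤ b → D (ℓ + 1) = D ℓ) :
    ∀ ℓ, a ≤ ℓ → ℓ ≤ b → D ℓ = D a := by
  intro ℓ hℓ
  refine Int.le_induction (motive := fun ℓ _ => ℓ ≤ b → D ℓ = D a) ?_ ?_ ℓ hℓ
  · intro _; rfl
  · intro ℓ hℓ ih hb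
    rw [h ℓ hℓ hb]; exact ih (by omega)




/-- Discrete Dirichlet Laplacian. -/
noncomputable def L1 (ε : ℝ) (v : ℤ → ℝ) (j : ℤ) : ℝ :=
  (-v (j + 1) + 2 * v j - v (j - 1)) / ε ^ 2

/-- Linearized atomistic operator. -/
noncomputable def La (ε φF φ2F : ℝ) (v : ℤ → ℝ) (j : ℤ) : ℝ :=
  φF * ((-v (j + 1) + 2 * v j - v (j - 1)) / ε ^ 2)
    + φ2F * ((-v (j + 2) + 2 * v j - v (j - 2)) / ε ^ 2)

/-- Linearized force-based QC operator. -/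
noncomputable def Lqcf (K : ℕ) (ε φF φ2F : ℝ) (v : ℤ → ℝ) (j : ℤ) : ℝ :=
  if |j| ≤ (K : ℤ) then La ε φF φ2F v j else (φF + 4 * φ2F) * L1 ε v j

/-- Discrete derivative (strain). -/
noncomputable def du (ε : ℝ) (u : ℤ → ℝ) (ℓ : ℤ) : ℝ := (u ℓ - u (ℓ - 1)) / ε

/-- The stress σ(u') of the QCF operator. -/
noncomputable def sigmaQcf (K : ℕ) (ε φF φ2F : ℝ) (u : ℤ → ℝ) (ℓ : ℤ) : ℝ :=
  if -(K : ℤ) + 1 ≤ ℓ ∧ ℓ ≤ (K : ℤ) then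
    φF * du ε u ℓ + φ2F * (du ε u (ℓ - 1) + 2 * du ε u ℓ + du ε u (ℓ + 1))
  else (φF + 4 * φ2F) * du ε u ℓ

/-- The discrete delta representation vector h_{K}. -/
noncomputable def hplus (K : ℕ) (ε : ℝ) (ℓ : ℤ) : ℝ :=
  if ℓ ≤ (K : ℤ) then (1 - ε * K) / 2 else (-1 - ε * K) / 2

/-- The discrete delta representation vector h_{−K}. -/
noncomputable def hminus (K : ℕ) (ε : ℝ) (ℓ : ℤ) : ℝ :=
  if ℓ ≤ -(K : ℤ) then (1 + ε * K) / 2 else (-1 + ε * K) / 2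

set_option maxHeartbeats 1600000

/-- explicit representation of z' where z = (L¹)⁻¹ L^{qcf} u. -/
theorem qcf_inverse_laplacian_representation
    (N K : ℕ) (hN : 2 ≤ N) (hK1 : 2 ≤ K) (hK2 : K + 2 ≤ N)
    (ε φF φ2F : ℝ) (hε : ε = 1 / N)
    (u z : ℤ → ℝ)
    (hu : ∀ j : ℤ, (N : ℤ) ≤ |j| → u j = 0)
    (hz : ∀ j : ℤ, (N : ℤ) ≤ |j| → z j = 0)
    (hLz : ∀ j ∈ Finset.Icc (-(N : ℤ) + 1) ((N : ℤ) - 1),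
      L1 ε z j = Lqcf K ε φF φ2F u j) :
    ∀ ℓ ∈ Finset.Icc (-(N : ℤ) + 1) (N : ℤ),
      du ε z ℓ = sigmaQcf K ε φF φ2F u ℓ
        - ε / 2 * φ2F * (du ε u ((K : ℤ) + 1) - du ε u (K : ℤ)
            - du ε u (-(K : ℤ) + 1) + du ε u (-(K : ℤ)))
        + φ2F * ((du ε u (-(K : ℤ) + 1) - 2 * du ε u (-(K : ℤ))
              + du ε u (-(K : ℤ) - 1)) * hminus K ε ℓ
            - (du ε u ((K : ℤ) + 2) - 2 * du ε u ((K : ℤ) + 1)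
              + du ε u (K : ℤ)) * hplus K ε ℓ) := by
  have hN0 : (N : ℝ) ≠ 0 := Nat.cast_ne_zero.mpr (by omega)
  have hε0 : ε ≠ 0 := by rw [hε]; simp [hN0]
  have hεN : ε * N = 1 := by rw [hε]; field_simp
  -- branch lemmas
  have hsA : ∀ m : ℤ, -(K : ℤ) + 1 ≤ m → m ≤ (K : ℤ) → sigmaQcf K ε φF φ2F u m
      = φF * du ε u m + φ2F * (du ε u (m - 1) + 2 * du ε u m + du ε u (m + 1)) :=
    fun m h1 h2 => by rw [sigmaQcf, if_pos ⟨h1, h2⟩]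
  have hsC : ∀ m : ℤ, ¬(-(K : ℤ) + 1 ≤ m ∧ m ≤ (K : ℤ)) → sigmaQcf K ε φF φ2F u m
      = (φF + 4 * φ2F) * du ε u m := fun m h => by rw [sigmaQcf, if_neg h]
  have hpT : ∀ m : ℤ, m ≤ (K : ℤ) → hplus K ε m = (1 - ε * K) / 2 :=
    fun m h => by rw [hplus, if_pos h]
  have hpF : ∀ m : ℤ, ¬(m ≤ (K : ℤ)) → hplus K ε m = (-1 - ε * K) / 2 :=
    fun m h => by rw [hplus, if_neg h]
  have hmT : ∀ m : ℤ, m ≤ -(K : ℤ) → hminus K ε m = (1 + ε * K) / 2 :=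
    fun m h => by rw [hminus, if_pos h]
  have hmF : ∀ m : ℤ, ¬(m ≤ -(K : ℤ)) → hminus K ε m = (-1 + ε * K) / 2 :=
    fun m h => by rw [hminus, if_neg h]
  have hLA : ∀ m : ℤ, |m| ≤ (K : ℤ) → Lqcf K ε φF φ2F u m = La ε φF φ2F u m :=
    fun m h => by rw [Lqcf, if_pos h]
  have hLC : ∀ m : ℤ, ¬(|m| ≤ (K : ℤ)) → Lqcf K ε φF φ2F u m = (φF + 4 * φ2F) * L1 ε u m :=
    fun m h => by rw [Lqcf, if_neg h]
  intro ℓ hℓmem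
  rw [Finset.mem_Icc] at hℓmem
  obtain ⟨hℓ1, hℓ2⟩ := hℓmem
  set G : ℤ → ℝ := fun m => sigmaQcf K ε φF φ2F u m
        - ε / 2 * φ2F * (du ε u ((K : ℤ) + 1) - du ε u (K : ℤ)
            - du ε u (-(K : ℤ) + 1) + du ε u (-(K : ℤ)))
        + φ2F * ((du ε u (-(K : ℤ) + 1) - 2 * du ε u (-(K : ℤ))
              + du ε u (-(K : ℤ) - 1)) * hminus K ε m
            - (du ε u ((K : ℤ) + 2) - 2 * du ε u ((K : ℤ) + 1)
              + du ε u (K : ℤ)) * hplus K ε m) with hGdef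
  show du ε z ℓ = G ℓ
  have hGm : ∀ m : ℤ, G m = sigmaQcf K ε φF φ2F u m
        - ε / 2 * φ2F * (du ε u ((K : ℤ) + 1) - du ε u (K : ℤ)
            - du ε u (-(K : ℤ) + 1) + du ε u (-(K : ℤ)))
        + φ2F * ((du ε u (-(K : ℤ) + 1) - 2 * du ε u (-(K : ℤ))
              + du ε u (-(K : ℤ) - 1)) * hminus K ε m
            - (du ε u ((K : ℤ) + 2) - 2 * du ε u ((K : ℤ) + 1)
              + du ε u (K : ℤ)) * hplus K ε m) := fun m => rfl
  -- Step equations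
  have hFstep : ∀ m : ℤ, -(N : ℤ) + 1 ≤ m → m ≤ (N : ℤ) - 1 →
      du ε z (m + 1) - du ε z m = -ε * Lqcf K ε φF φ2F u m := by
    intro m h1 h2
    rw [← hLz m (Finset.mem_Icc.mpr ⟨h1, h2⟩)]
    simp only [du, L1]
    field_simp
    ring
  have hGstep : ∀ m : ℤ, -(N : ℤ) + 1 ≤ m → m ≤ (N : ℤ) - 1 →
      G (m + 1) - G m = -ε * Lqcf K ε φF φ2F u m := by
    intro m h1 h2
    rw [hGm (m + 1), hGm m]
    by_cases c1 : m ≤ -(K : ℤ) - 1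
    · rw [hsC (m + 1) (by omega), hsC m (by omega), hmT (m + 1) (by omega), hmT m (by omega),
        hpT (m + 1) (by omega), hpT m (by omega), hLC m (by rw [abs_le]; omega)]
      simp only [du, L1]
      field_simp
      ring
    · by_cases c2 : m = -(K : ℤ)
      · subst c2
        rw [hsA (-(K : ℤ) + 1) (by omega) (by omega), hsC (-(K : ℤ)) (by omega),
          hmT (-(K : ℤ)) (by omega), hmF (-(K : ℤ) + 1) (by omega),
          hpT (-(K : ℤ) + 1) (by omega), hpT (-(K : ℤ)) (by omega),
          hLA (-(K : ℤ)) (by rw [abs_le]; omega)]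
        simp only [du, La]
        ring_nf
        field_simp
      · by_cases c3 : m ≤ (K : ℤ) - 1
        · rw [hsA (m + 1) (by omega) (by omega), hsA m (by omega) (by omega),
            hmF (m + 1) (by omega), hmF m (by omega),
            hpT (m + 1) (by omega), hpT m (by omega), hLA m (by rw [abs_le]; omega)]
          simp only [du, La]
          ring_nf
          field_simp
        · by_cases c4 : m = (K : ℤ)
          · subst c4
            rw [hsC ((K : ℤ) + 1) (by omega), hsA (K : ℤ) (by omega) (by omega),
              hmF ((K : ℤ) + 1) (by omega), hmF (K : ℤ) (by omega),
              hpT (K : ℤ) (by omega), hpF ((K : ℤ) + 1) (by omega),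
              hLA (K : ℤ) (by rw [abs_le]; omega)]
            simp only [du, La]
            ring_nf
            field_simp
          · rw [hsC (m + 1) (by omega), hsC m (by omega),
              hmF (m + 1) (by omega), hmF m (by omega),
              hpF (m + 1) (by omega), hpF m (by omega), hLC m (by rw [abs_le]; omega)]
            simp only [du, L1]
            field_simp
            ring
  -- constancy of the difference
  set D : ℤ → ℝ := fun m => du ε z m - G m with hDdef
  have hDstep : ∀ m : ℤ, -(N : ℤ) + 1 ≤ m → m + 1 ≤ (N : ℤ) → D (m + 1) = D m := by
    intro m h1 h2
    have e1 := hFstep m h1 (by omega)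
    have e2 := hGstep m h1 (by omega)
    show du ε z (m + 1) - G (m + 1) = du ε z m - G m
    linarith
  have hconst := const_of_step D (-(N : ℤ) + 1) (N : ℤ) hDstep
  -- telescoping sums
  have hu_sum : ∑ m ∈ Finset.Icc (-(N : ℤ) + 1) (N : ℤ), du ε u m = 0 := by
    rw [Finset.sum_congr rfl (fun m _ => show du ε u m
        = (fun j => u j / ε) m - (fun j => u j / ε) (m - 1) from by simp [du, sub_div]),
      tele_sum (fun j => u j / ε) (-(N : ℤ)) (N : ℤ) (by omega)]
    rw [hu (N : ℤ) (by simp), hu (-(N : ℤ)) (by simp)]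
    simp
  have hz_sum : ∑ m ∈ Finset.Icc (-(N : ℤ) + 1) (N : ℤ), du ε z m = 0 := by
    rw [Finset.sum_congr rfl (fun m _ => show du ε z m
        = (fun j => z j / ε) m - (fun j => z j / ε) (m - 1) from by simp [du, sub_div]),
      tele_sum (fun j => z j / ε) (-(N : ℤ)) (N : ℤ) (by omega)]
    rw [hz (N : ℤ) (by simp), hz (-(N : ℤ)) (by simp)]
    simp
  -- sum of hplus and hminus
  have hp_sum : ∑ m ∈ Finset.Icc (-(N : ℤ) + 1) (N : ℤ), hplus K ε m = 0 := by
    have hsplit : Finset.Icc (-(N : ℤ) + 1) (N : ℤ)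
        = Finset.Icc (-(N : ℤ) + 1) (K : ℤ) ∪ Finset.Icc ((K : ℤ) + 1) (N : ℤ) := by
      ext x; simp only [Finset.mem_Icc, Finset.mem_union]; omega
    have hdisj : Disjoint (Finset.Icc (-(N : ℤ) + 1) (K : ℤ)) (Finset.Icc ((K : ℤ) + 1) (N : ℤ)) := by
      rw [Finset.disjoint_left]; intro x h1 h2
      rw [Finset.mem_Icc] at h1 h2; omega
    rw [hsplit, Finset.sum_union hdisj,
      Finset.sum_congr rfl (fun m hm => hpT m (Finset.mem_Icc.mp hm).2),
      Finset.sum_congr rfl (fun m hm => hpF m (by have := Finset.mem_Icc.mp hm; omega)),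
      Finset.sum_const, Finset.sum_const]
    have c1 : ((Finset.Icc (-(N : ℤ) + 1) (K : ℤ)).card : ℝ) = (N : ℝ) + K := by
      have h := Int.card_Icc_of_le (a := -(N : ℤ) + 1) (b := (K : ℤ)) (by omega)
      have : ((Finset.Icc (-(N : ℤ) + 1) (K : ℤ)).card : ℤ) = (N : ℤ) + K := by omega
      exact_mod_cast this
    have c2 : ((Finset.Icc ((K : ℤ) + 1) (N : ℤ)).card : ℝ) = (N : ℝ) - K := by
      have h := Int.card_Icc_of_le (a := (K : ℤ) + 1) (b := (N : ℤ)) (by omega)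
      have : ((Finset.Icc ((K : ℤ) + 1) (N : ℤ)).card : ℤ) = (N : ℤ) - K := by omega
      exact_mod_cast this
    rw [nsmul_eq_mul, nsmul_eq_mul, c1, c2]
    linear_combination (-(K : ℝ)) * hεN
  have hm_sum : ∑ m ∈ Finset.Icc (-(N : ℤ) + 1) (N : ℤ), hminus K ε m = 0 := by
    have hsplit : Finset.Icc (-(N : ℤ) + 1) (N : ℤ)
        = Finset.Icc (-(N : ℤ) + 1) (-(K : ℤ)) ∪ Finset.Icc (-(K : ℤ) + 1) (N : ℤ) := by
      ext x; simp only [Finset.mem_Icc, Finset.mem_union]; omega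
    have hdisj : Disjoint (Finset.Icc (-(N : ℤ) + 1) (-(K : ℤ)))
        (Finset.Icc (-(K : ℤ) + 1) (N : ℤ)) := by
      rw [Finset.disjoint_left]; intro x h1 h2
      rw [Finset.mem_Icc] at h1 h2; omega
    rw [hsplit, Finset.sum_union hdisj,
      Finset.sum_congr rfl (fun m hm => hmT m (Finset.mem_Icc.mp hm).2),
      Finset.sum_congr rfl (fun m hm => hmF m (by have := Finset.mem_Icc.mp hm; omega)),
      Finset.sum_const, Finset.sum_const]
    have c1 : ((Finset.Icc (-(N : ℤ) + 1) (-(K : ℤ))).card : ℝ) = (N : ℝ) - K := by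
      have h := Int.card_Icc_of_le (a := -(N : ℤ) + 1) (b := -(K : ℤ)) (by omega)
      have : ((Finset.Icc (-(N : ℤ) + 1) (-(K : ℤ))).card : ℤ) = (N : ℤ) - K := by omega
      exact_mod_cast this
    have c2 : ((Finset.Icc (-(K : ℤ) + 1) (N : ℤ)).card : ℝ) = (N : ℝ) + K := by
      have h := Int.card_Icc_of_le (a := -(K : ℤ) + 1) (b := (N : ℤ)) (by omega)
      have : ((Finset.Icc (-(K : ℤ) + 1) (N : ℤ)).card : ℤ) = (N : ℤ) + K := by omega
      exact_mod_cast this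
    rw [nsmul_eq_mul, nsmul_eq_mul, c1, c2]
    linear_combination (K : ℝ) * hεN
  -- sum of sigma
  have hσ_sum : ∑ m ∈ Finset.Icc (-(N : ℤ) + 1) (N : ℤ), sigmaQcf K ε φF φ2F u m
      = φ2F * (du ε u ((K : ℤ) + 1) - du ε u (-(K : ℤ) + 1)
          - du ε u (K : ℤ) + du ε u (-(K : ℤ))) := by
    have hσsplit : ∀ m : ℤ, sigmaQcf K ε φF φ2F u m = (φF + 4 * φ2F) * du ε u m
        + (if -(K : ℤ) + 1 ≤ m ∧ m ≤ (K : ℤ) then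
            φ2F * (du ε u (m - 1) - 2 * du ε u m + du ε u (m + 1)) else 0) := by
      intro m; rw [sigmaQcf]; split_ifs <;> ring
    rw [Finset.sum_congr rfl (fun m _ => hσsplit m), Finset.sum_add_distrib,
      ← Finset.mul_sum, hu_sum, mul_zero, zero_add, ← Finset.sum_filter]
    have hfe : (Finset.Icc (-(N : ℤ) + 1) (N : ℤ)).filter
        (fun m => -(K : ℤ) + 1 ≤ m ∧ m ≤ (K : ℤ)) = Finset.Icc (-(K : ℤ) + 1) (K : ℤ) := by
      ext x; simp only [Finset.mem_filter, Finset.mem_Icc]; omega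
    rw [hfe]
    have e : ∀ m : ℤ, φ2F * (du ε u (m - 1) - 2 * du ε u m + du ε u (m + 1))
        = φ2F * (((fun j => du ε u (j + 1)) m - (fun j => du ε u (j + 1)) (m - 1))
          - ((fun j => du ε u j) m - (fun j => du ε u j) (m - 1))) := by
      intro m; simp only; rw [show m - 1 + 1 = m from by ring]; ring
    rw [Finset.sum_congr rfl (fun m _ => e m), ← Finset.mul_sum, Finset.sum_sub_distrib,
      tele_sum (fun j => du ε u (j + 1)) (-(K : ℤ)) (K : ℤ) (by omega),
      tele_sum (fun j => du ε u j) (-(K : ℤ)) (K : ℤ) (by omega)]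
    ring
  -- sum of G
  have hG_sum : ∑ m ∈ Finset.Icc (-(N : ℤ) + 1) (N : ℤ), G m = 0 := by
    rw [Finset.sum_congr rfl (fun m _ => hGm m)]
    rw [Finset.sum_add_distrib, Finset.sum_sub_distrib, Finset.sum_const, ← Finset.mul_sum,
      Finset.sum_sub_distrib, ← Finset.mul_sum, ← Finset.mul_sum, hm_sum, hp_sum, hσ_sum]
    have ccard : ((Finset.Icc (-(N : ℤ) + 1) (N : ℤ)).card : ℝ) = 2 * N := by
      have h := Int.card_Icc_of_le (a := -(N : ℤ) + 1) (b := (N : ℤ)) (by omega)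
      have : ((Finset.Icc (-(N : ℤ) + 1) (N : ℤ)).card : ℤ) = 2 * N := by omega
      exact_mod_cast this
    rw [nsmul_eq_mul, ccard]
    linear_combination (-(φ2F) * (du ε u ((K : ℤ) + 1) - du ε u (K : ℤ)
      - du ε u (-(K : ℤ) + 1) + du ε u (-(K : ℤ)))) * hεN
  -- conclude
  have hD_sum : ∑ m ∈ Finset.Icc (-(N : ℤ) + 1) (N : ℤ), D m = 0 := by
    have : ∀ m : ℤ, D m = du ε z m - G m := fun m => rfl
    rw [Finset.sum_congr rfl (fun m _ => this m), Finset.sum_sub_distrib, hz_sum, hG_sum]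
    ring
  have hDa : D (-(N : ℤ) + 1) = 0 := by
    have hconstsum : ∑ m ∈ Finset.Icc (-(N : ℤ) + 1) (N : ℤ), D m
        = ((Finset.Icc (-(N : ℤ) + 1) (N : ℤ)).card : ℝ) * D (-(N : ℤ) + 1) := by
      rw [Finset.sum_congr rfl (fun m hm => by
        have := Finset.mem_Icc.mp hm
        exact hconst m this.1 this.2), Finset.sum_const, nsmul_eq_mul]
    have ccard : ((Finset.Icc (-(N : ℤ) + 1) (N : ℤ)).card : ℝ) = 2 * N := by
      have h := Int.card_Icc_of_le (a := -(N : ℤ) + 1) (b := (N : ℤ)) (by omega)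
      have : ((Finset.Icc (-(N : ℤ) + 1) (N : ℤ)).card : ℤ) = 2 * N := by omega
      exact_mod_cast this
    rw [hD_sum, ccard] at hconstsum
    have h2N : (2 : ℝ) * (N : ℝ) ≠ 0 := by positivity
    have hmz : (2 * (N : ℝ)) * D (-(N : ℤ) + 1) = 0 := hconstsum.symm
    exact (mul_eq_zero.mp hmz).resolve_left h2N
  have hDℓ : D ℓ = 0 := by rw [hconst ℓ hℓ1 hℓ2, hDa]
  have : du ε z ℓ - G ℓ = 0 := hDℓ
  linarith
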